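/- Triangularity of the transition matrix at equal parameters: let λ, μ be strict partitions of length r, and define the r×r matrix D with entries D_{ij} = Σ_{k≥0} β^k C(i-j, k) h_{μ_i - λ_j + k}(b_1,…,b_{λ_j}; -b_1,…,-b_{μ_i-1}) (with the supersymmetric complete homogeneous functions h and generalized binomial coefficients C(-N,k) = (-1)^k C(N+k-1,k)). If λ_i ≤ μ_i for all i, then D_{ii} = δ_{λ_i μ_i} and D_{ij} = 0 for i < j; consequently det(D) = δ_{λμ}. -/

import Mathlib

open Finset

/-- Generalized binomial coefficient `C(z, k) = z(z-1)⋯(z-k+1)/k!` for `z : ℤ`;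
for `z = -N < 0` it equals `(-1)^k C(N+k-1,k)`. -/
noncomputable def gbinom {K : Type*} [Field K] (z : ℤ) (k : ℕ) : K :=
  (∏ i ∈ Finset.range k, ((z : K) - (i : K))) / (Nat.factorial k : K)

/-- Complete homogeneous symmetric function `h_p(v 0, …, v (a-1))` of `a` variables. -/
def hpoly {K : Type*} [CommRing K] (a : ℕ) (v : ℕ → K) (p : ℕ) : K :=
  ∑ dd ∈ Finset.Nat.antidiagonalTuple a p, ∏ i : Fin a, v i ^ dd i

/-- Elementary symmetric function `e_t(v 0, …, v (a-1))` of `a` variables. -/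
def epoly {K : Type*} [CommRing K] (a : ℕ) (v : ℕ → K) (t : ℕ) : K :=
  ∑ S ∈ Finset.powersetCard t (Finset.range a), ∏ i ∈ S, v i

/-- Supersymmetric complete homogeneous function `h_p(b₁,…,b_a; -c₁,…,-c_C)`, with
generating function `∏_{k=1}^{C}(1-c_k t)/∏_{k=1}^{a}(1-b_k t) = Σ_p h_p t^p`; it is
`Σ_t (-1)^t e_t(c) h_{p-t}(b)` for `p ≥ 0` and `0` for `p < 0`. -/
noncomputable def hsup {K : Type*} [CommRing K] (a C : ℕ) (b c : ℕ → K) (p : ℤ) : K :=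
  if 0 ≤ p then
    ∑ t ∈ Finset.range (p.toNat + 1), (-1 : K) ^ t * epoly C c t * hpoly a b (p.toNat - t)
  else 0

section Aux
open PowerSeries
variable {K : Type*} [CommRing K]

lemma hpoly_zero (a : ℕ) (v : ℕ → K) : hpoly a v 0 = 1 := by
  simp [hpoly, Finset.Nat.antidiagonalTuple_zero_right]

lemma epoly_zero (a : ℕ) (v : ℕ → K) : epoly a v 0 = 1 := by
  simp [epoly]

lemma hpoly_eq (a : ℕ) (v : ℕ → K) (p : ℕ) :
    hpoly a v p = PowerSeries.coeff p (∏ i : Fin a, PowerSeries.mk (fun q => v i ^ q)) := by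
  classical
  rw [PowerSeries.coeff_prod]
  rw [hpoly]
  refine Finset.sum_nbij' (fun d => Finsupp.equivFunOnFinite.symm d) (fun l => ⇑l) ?_ ?_ ?_ ?_ ?_
  · intro d hd
    simp only [Finset.mem_finsuppAntidiag]
    constructor
    · simpa [Finsupp.sum] using (Finset.Nat.mem_antidiagonalTuple.mp hd)
    · exact Finset.subset_univ _
  · intro l hl
    simp only [Finset.mem_finsuppAntidiag] at hl
    simpa [Finset.Nat.mem_antidiagonalTuple] using hl.1
  · intro d hd; simp [Finsupp.equivFunOnFinite]
  · intro l hl; simp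
  · intro d hd
    simp [PowerSeries.coeff_mk]

lemma geom_inv (x : K) :
    (1 - PowerSeries.C x * PowerSeries.X) * PowerSeries.mk (fun q => x ^ q) = 1 := by
  ext n
  rw [sub_mul, one_mul, map_sub]
  cases n with
  | zero => simp
  | succ n =>
    rw [mul_assoc, PowerSeries.coeff_C_mul, PowerSeries.coeff_succ_X_mul]
    simp [pow_succ, mul_comm]

lemma gf (a : ℕ) (v : ℕ → K) :
    (∏ k ∈ Finset.range a, (1 - PowerSeries.C (v k) * PowerSeries.X)) *
      PowerSeries.mk (hpoly a v) = 1 := by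
  have h1 : PowerSeries.mk (hpoly a v)
      = ∏ k ∈ Finset.range a, PowerSeries.mk (fun q => v k ^ q) := by
    ext p
    rw [PowerSeries.coeff_mk, hpoly_eq, Fin.prod_univ_eq_prod_range
      (fun k => PowerSeries.mk (fun q => (v k) ^ q)) a]
  rw [h1, ← Finset.prod_mul_distrib]
  simp [geom_inv]

lemma epoly_succ (C : ℕ) (v : ℕ → K) (t : ℕ) :
    epoly (C + 1) v (t + 1) = epoly C v (t + 1) + v C * epoly C v t := by
  classical
  have hCn : C ∉ Finset.range C := by simp
  have hsub : ∀ S : Finset ℕ, S ∈ Finset.powersetCard t (Finset.range C) → C ∉ S :=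
    fun S hS h => hCn ((Finset.mem_powersetCard.mp hS).1 h)
  have hdisj : Disjoint (Finset.powersetCard (t + 1) (Finset.range C))
      ((Finset.powersetCard t (Finset.range C)).image (insert C)) := by
    rw [Finset.disjoint_right]
    intro S hS' hS
    obtain ⟨T, hT, rfl⟩ := Finset.mem_image.mp hS'
    exact hCn ((Finset.mem_powersetCard.mp hS).1 (Finset.mem_insert_self C T))
  rw [epoly, Finset.range_add_one, Finset.powersetCard_succ_insert hCn,
    Finset.sum_union hdisj, Finset.sum_image ?inj]
  case inj =>
    intro S hS T hT hST
    have := congrArg (fun U => Finset.erase U C) hST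
    simpa [Finset.erase_insert (hsub S hS), Finset.erase_insert (hsub T hT)] using this
  rw [epoly, epoly, Finset.mul_sum]
  congr 1
  exact Finset.sum_congr rfl fun S hS => Finset.prod_insert (hsub S hS)

lemma coeff_mul_onesub (f : PowerSeries K) (x : K) (t : ℕ) :
    PowerSeries.coeff (t + 1) (f * (1 - PowerSeries.C x * PowerSeries.X))
      = PowerSeries.coeff (t + 1) f - x * PowerSeries.coeff t f := by
  have h : f * (1 - PowerSeries.C x * PowerSeries.X)
      = f - PowerSeries.C x * (PowerSeries.X * f) := by ring
  rw [h, map_sub, PowerSeries.coeff_C_mul, PowerSeries.coeff_succ_X_mul]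

lemma coeff_P (C : ℕ) (v : ℕ → K) (t : ℕ) :
    PowerSeries.coeff t (∏ k ∈ Finset.range C, (1 - PowerSeries.C (v k) * PowerSeries.X))
      = (-1 : K) ^ t * epoly C v t := by
  induction C generalizing t with
  | zero =>
    cases t with
    | zero => simp [epoly]
    | succ t =>
      rw [Finset.range_zero, Finset.prod_empty, PowerSeries.coeff_one, if_neg (Nat.succ_ne_zero t)]
      rw [epoly, Finset.range_zero, Finset.powersetCard_eq_empty.mpr (by simp)]
      simp
  | succ C ih =>
    rw [Finset.prod_range_succ]
    cases t with
    | zero =>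
      simp only [pow_zero, one_mul, epoly_zero]
      rw [PowerSeries.coeff_zero_eq_constantCoeff, map_mul]
      simp [← PowerSeries.coeff_zero_eq_constantCoeff, ih 0, epoly_zero]
    | succ t =>
      rw [coeff_mul_onesub, ih, ih, epoly_succ]
      ring

lemma coeff_prod_vanish (s : Finset ℕ) (v : ℕ → K) (p : ℕ) (hp : s.card < p) :
    PowerSeries.coeff p (∏ k ∈ s, (1 - PowerSeries.C (v k) * PowerSeries.X)) = 0 := by
  classical
  induction s using Finset.cons_induction_on generalizing p with
  | empty =>
    simp only [Finset.prod_empty]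
    rw [PowerSeries.coeff_one, if_neg (by omega)]
  | cons _ _ ha ih =>
    obtain ⟨t, rfl⟩ : ∃ t, p = t + 1 := ⟨p - 1, by simp at hp; omega⟩
    rw [Finset.prod_cons, mul_comm, coeff_mul_onesub, ih _ (by rw [Finset.card_cons] at hp; omega),
      ih _ (by rw [Finset.card_cons] at hp; omega)]
    ring

lemma hsup_sum_zero (a C p : ℕ) (v : ℕ → K) (ha : a ≤ C) (hp : C - a < p) :
    ∑ t ∈ Finset.range (p + 1), (-1 : K) ^ t * epoly C v t * hpoly a v (p - t) = 0 := by
  have key : ∑ t ∈ Finset.range (p + 1), (-1 : K) ^ t * epoly C v t * hpoly a v (p - t)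
      = PowerSeries.coeff p
        ((∏ k ∈ Finset.range C, (1 - PowerSeries.C (v k) * PowerSeries.X)) *
          PowerSeries.mk (hpoly a v)) := by
    rw [PowerSeries.coeff_mul, Finset.Nat.sum_antidiagonal_eq_sum_range_succ_mk]
    refine Finset.sum_congr rfl fun t ht => ?_
    rw [coeff_P, PowerSeries.coeff_mk, mul_assoc]
  rw [key, ← Finset.prod_range_mul_prod_Ico
      (fun k => (1 - PowerSeries.C (v k) * PowerSeries.X)) ha]
  have h2 : ((∏ k ∈ Finset.range a, (1 - PowerSeries.C (v k) * PowerSeries.X)) *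
        ∏ k ∈ Finset.Ico a C, (1 - PowerSeries.C (v k) * PowerSeries.X)) *
        PowerSeries.mk (hpoly a v)
      = (∏ k ∈ Finset.Ico a C, (1 - PowerSeries.C (v k) * PowerSeries.X)) *
        ((∏ k ∈ Finset.range a, (1 - PowerSeries.C (v k) * PowerSeries.X)) *
          PowerSeries.mk (hpoly a v)) := by ring
  rw [h2, gf, mul_one, coeff_prod_vanish _ _ _ (by rwa [Nat.card_Ico])]

end Aux

/-- Triangularity of the transition matrix at equal parameters.  For strict
partitions `λ, μ` of length `r`, let `D_{ij} = Σ_{k≥0} β^k C(i-j,k)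
h_{μ_i - λ_j + k}(b₁,…,b_{λ_j}; -b₁,…,-b_{μ_i-1})`.  If `λ_i ≤ μ_i` for all `i`, then
`D_{ii} = δ_{λ_i μ_i}`, `D_{ij} = 0` for `i < j`, and consequently `det D = δ_{λμ}`. -/
theorem stmt_10 {K : Type*} [Field K] [CharZero K] (β : K) (r : ℕ)
    (lam mu : Fin r → ℕ) (b : ℕ → K)
    (hlam : ∀ i j : Fin r, i < j → lam j < lam i) (hlampos : ∀ i, 0 < lam i)
    (hmu : ∀ i j : Fin r, i < j → mu j < mu i) (hmupos : ∀ i, 0 < mu i)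
    (hle : ∀ i, lam i ≤ mu i)
    (D : Matrix (Fin r) (Fin r) K)
    (hD : ∀ i j, D i j = ∑ᶠ k : ℕ,
      β ^ k * gbinom (K := K) ((i : ℤ) - (j : ℤ)) k *
        hsup (lam j) (mu i - 1) b b ((mu i : ℤ) - (lam j : ℤ) + k)) :
    (∀ i, D i i = if lam i = mu i then 1 else 0) ∧
    (∀ i j, i < j → D i j = 0) ∧
    D.det = (if lam = mu then 1 else 0) := by
  classical
  have hsup_nat : ∀ (a C p : ℕ), hsup (K := K) a C b b (p : ℤ) =
      ∑ t ∈ Finset.range (p + 1), (-1 : K) ^ t * epoly C b t * hpoly a b (p - t) := by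
    intro a C p
    rw [hsup, if_pos (Int.natCast_nonneg p), Int.toNat_natCast]
  have hsupz : ∀ (a C : ℕ), hsup (K := K) a C b b 0 = 1 := by
    intro a C
    rw [show (0 : ℤ) = ((0 : ℕ) : ℤ) from rfl, hsup_nat]
    simp [epoly_zero, hpoly_zero]
  have hvanish : ∀ (a C p : ℕ), a ≤ C → C - a < p → hsup (K := K) a C b b (p : ℤ) = 0 := by
    intro a C p ha hp
    rw [hsup_nat]
    exact hsup_sum_zero a C p b ha hp
  have hdiag : ∀ i, D i i = if lam i = mu i then 1 else 0 := by
    intro i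
    rw [hD]
    have h0 : ∀ k : ℕ, k ≠ 0 → β ^ k * gbinom (K := K) ((i : ℤ) - (i : ℤ)) k *
        hsup (lam i) (mu i - 1) b b ((mu i : ℤ) - (lam i : ℤ) + k) = 0 := by
      intro k hk
      have hg : gbinom (K := K) ((i : ℤ) - (i : ℤ)) k = 0 := by
        rw [gbinom, Finset.prod_eq_zero (Finset.mem_range.mpr (Nat.pos_of_ne_zero hk))
          (by rw [sub_self]; norm_num), zero_div]
      rw [hg, mul_zero, zero_mul]
    rw [finsum_eq_single _ 0 h0]
    have hg0 : gbinom (K := K) ((i : ℤ) - (i : ℤ)) 0 = 1 := by simp [gbinom]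
    rw [pow_zero, one_mul, hg0, one_mul]
    by_cases h : lam i = mu i
    · rw [if_pos h, h, show ((mu i : ℤ) - (mu i : ℤ) + (0 : ℕ) = 0) by simp, hsupz]
    · have hlt : lam i < mu i := lt_of_le_of_ne (hle i) h
      rw [if_neg h, show ((mu i : ℤ) - (lam i : ℤ) + (0 : ℕ) = ((mu i - lam i : ℕ) : ℤ)) by omega,
        hvanish _ _ _ (by omega) (by have := hmupos i; omega)]
  have htri : ∀ i j, i < j → D i j = 0 := by
    intro i j hij
    rw [hD]
    have h0 : ∀ k : ℕ, β ^ k * gbinom (K := K) ((i : ℤ) - (j : ℤ)) k *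
        hsup (lam j) (mu i - 1) b b ((mu i : ℤ) - (lam j : ℤ) + k) = 0 := by
      intro k
      have hlj : lam j < mu i := lt_of_lt_of_le (hlam i j hij) (hle i)
      rw [show ((mu i : ℤ) - (lam j : ℤ) + k = ((mu i - lam j + k : ℕ) : ℤ)) by omega,
        hvanish _ _ _ (by omega) (by have := hmupos i; omega), mul_zero]
    rw [finsum_congr h0, finsum_zero]
  refine ⟨hdiag, htri, ?_⟩
  have hdet : D.det = ∏ i, D i i := by
    apply Matrix.det_of_lowerTriangular
    intro a c h
    exact htri a c (by simpa using h)
  rw [hdet]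
  by_cases hlm : lam = mu
  · rw [if_pos hlm]
    refine Finset.prod_eq_one fun i _ => ?_
    rw [hdiag i, if_pos (congrFun hlm i)]
  · rw [if_neg hlm]
    obtain ⟨i, hi⟩ := Function.ne_iff.mp hlm
    exact Finset.prod_eq_zero (Finset.mem_univ i) (by rw [hdiag i, if_neg hi])
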